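/- Let A be an invertible n×n complex matrix with columns a_1,...,a_n ∈ ℂⁿ and let b_1,...,b_n be the rows of A⁻¹. Then the families {\overline{b_1^T},...,\overline{b_n^T}} and {a_1,...,a_n} form a bi-orthogonal pair in ℂⁿ, and there is an absolute constant c > 0 (independent of n and A) such that log n ≤ c · (max_{1≤k≤n} ‖b_k‖) · (max_{1≤k≤n} ‖∑_{j=1}^k a_j‖), where ‖·‖ is the Euclidean (ℓ²) norm on ℂⁿ. -/

import Mathlib

open Complex Finset

noncomputable def stmt15e (N : ℕ) (m : ℤ) : ℂ := Complex.exp (2 * Real.pi * I * m / N)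

lemma stmt15e_add (N : ℕ) (a b : ℤ) : stmt15e N (a + b) = stmt15e N a * stmt15e N b := by
  rw [stmt15e, stmt15e, stmt15e, ← Complex.exp_add]
  congr 1
  push_cast
  ring

lemma stmt15e_conj (N : ℕ) (m : ℤ) : (starRingEnd ℂ) (stmt15e N m) = stmt15e N (-m) := by
  rw [stmt15e, stmt15e, ← Complex.exp_conj]
  congr 1
  simp only [map_div₀, map_mul, Complex.conj_I, Complex.conj_ofReal, map_intCast, map_natCast,
    map_ofNat]
  push_cast
  ring

lemma stmt15e_pow (N : ℕ) (m : ℤ) (t : ℕ) : stmt15e N m ^ t = stmt15e N (m * t) := by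
  rw [stmt15e, stmt15e, ← Complex.exp_nat_mul]
  congr 1
  push_cast
  ring

lemma stmt15e_ne_one (N : ℕ) (m : ℤ) (hm : m ≠ 0) (hmN : |m| < N) : stmt15e N m ≠ 1 := by
  have hN : 0 < N := by exact_mod_cast lt_of_le_of_lt (abs_nonneg m) hmN
  rw [stmt15e]
  intro hone
  rw [Complex.exp_eq_one_iff] at hone
  obtain ⟨k, hk⟩ := hone
  have hNne : (N : ℂ) ≠ 0 := Nat.cast_ne_zero.2 hN.ne'
  have hIpi : (2 * Real.pi * I : ℂ) ≠ 0 := by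
    simp [Complex.ext_iff, Real.pi_ne_zero, I_ne_zero]
  have : (m : ℂ) = k * N := by
    field_simp at hk
    have h3 : (2 * (Real.pi:ℂ) * I) * m = (2 * Real.pi * I) * (k * N) := by
      linear_combination (2 * (Real.pi:ℂ) * I) * hk
    exact mul_left_cancel₀ hIpi h3
  have hmk : m = k * N := by exact_mod_cast this
  rcases eq_or_ne k 0 with rfl | hk0
  · simp at hmk; exact hm hmk
  · have hNm : (N : ℤ) ≤ |m| := by
      rw [hmk, abs_mul, abs_of_nonneg (by positivity : (0:ℤ) ≤ (N:ℤ))]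
      have h1 : 1 ≤ |k| := Int.one_le_abs hk0
      nlinarith [abs_nonneg k, (by positivity : (0:ℤ) ≤ (N:ℤ))]
    exact absurd hmN (not_lt.2 (by exact_mod_cast hNm))

lemma stmt15e_orth (N : ℕ) (hN : 0 < N) (d : ℤ) (hdN : |d| < N) :
    ∑ t ∈ Finset.range N, stmt15e N (d * t) = if d = 0 then (N : ℂ) else 0 := by
  split_ifs with h
  · simp [h, stmt15e]
  · have hx1 : stmt15e N d ≠ 1 := stmt15e_ne_one N d h hdN
    have hxN : stmt15e N d ^ N = 1 := by
      rw [stmt15e_pow, stmt15e]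
      have hNne : (N : ℂ) ≠ 0 := Nat.cast_ne_zero.2 hN.ne'
      have : (2 * (Real.pi:ℂ) * I * (d * N) / N) = (d : ℂ) * (2 * (Real.pi:ℂ) * I) := by
        field_simp
      rw [show ((d * (N:ℤ) : ℤ) : ℂ) = (d : ℂ) * (N : ℂ) by push_cast; ring] at *
      rw [this]
      exact_mod_cast Complex.exp_int_mul_two_pi_mul_I d
    calc ∑ t ∈ Finset.range N, stmt15e N (d * t) = ∑ t ∈ Finset.range N, stmt15e N d ^ t := by
          simp [stmt15e_pow]
      _ = (stmt15e N d ^ N - 1) / (stmt15e N d - 1) := geom_sum_eq hx1 N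
      _ = 0 := by rw [hxN]; simp

lemma stmt15_aux_sum (x : ℂ) (N : ℕ) :
    (x - 1) * ∑ t ∈ Finset.range N, (t:ℂ) * x ^ t
      = ((N:ℂ) - 1) * x ^ N + 1 - ∑ t ∈ Finset.range N, x ^ t := by
  induction N with
  | zero => simp
  | succ n ih =>
    rw [Finset.sum_range_succ, Finset.sum_range_succ]
    push_cast
    ring_nf
    ring_nf at ih
    linear_combination ih

lemma stmt15_sum_t_pow (x : ℂ) (N : ℕ) (hx : x ≠ 1) (hxN : x ^ N = 1) :
    ∑ t ∈ Finset.range N, (t:ℂ) * x ^ t = N / (x - 1) := by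
  have hx0 : x - 1 ≠ 0 := sub_ne_zero.2 hx
  rw [eq_div_iff hx0]
  have hgeo : ∑ t ∈ Finset.range N, x ^ t = 0 := by
    rw [geom_sum_eq hx, hxN]; simp
  have := stmt15_aux_sum x N
  rw [hxN, hgeo] at this
  linear_combination this

lemma stmt15_re_val (N m : ℕ) :
    (2 * Real.pi * I / (stmt15e N m - 1)).re
      = Real.pi * Real.sin (2*Real.pi*m/N) / (1 - Real.cos (2*Real.pi*m/N)) := by
  have hx : stmt15e N m = Complex.exp ((2*Real.pi*m/N : ℝ) * I) := by
    rw [stmt15e]; congr 1; push_cast; ring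
  have hre : (stmt15e N m - 1).re = Real.cos (2*Real.pi*m/N) - 1 := by
    rw [hx, Complex.sub_re, Complex.exp_ofReal_mul_I_re, Complex.one_re]
  have him : (stmt15e N m - 1).im = Real.sin (2*Real.pi*m/N) := by
    rw [hx, Complex.sub_im, Complex.exp_ofReal_mul_I_im, Complex.one_im, sub_zero]
  set c := Real.cos (2*Real.pi*m/N)
  set s := Real.sin (2*Real.pi*m/N)
  have hns : Complex.normSq (stmt15e N m - 1) = 2 * (1 - c) := by
    rw [Complex.normSq_apply, hre, him]
    have := Real.sin_sq_add_cos_sq (2*Real.pi*m/N)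
    nlinarith [this]
  rw [Complex.div_re, hns, hre, him]
  have h1 : (2 * (Real.pi:ℂ) * I).re = 0 := by simp
  have h2 : (2 * (Real.pi:ℂ) * I).im = 2 * Real.pi := by simp
  rw [h1, h2]
  rcases eq_or_ne (1 - c) 0 with h | h
  · rw [h]; simp
  · field_simp
    ring

lemma stmt15_ratio_nonneg {φ : ℝ} (h0 : 0 < φ) (hπ : φ < Real.pi) :
    0 ≤ Real.pi * Real.sin φ / (1 - Real.cos φ) := by
  have hs := Real.sin_pos_of_pos_of_lt_pi h0 hπ
  have hc := Real.cos_le_one φ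
  apply div_nonneg (by positivity) (by linarith)


lemma stmt15_ratio_ge {φ : ℝ} (h0 : 0 < φ) (hπ : φ ≤ Real.pi/2) :
    Real.pi / φ ≤ Real.pi * Real.sin φ / (1 - Real.cos φ) := by
  have hp := Real.pi_pos
  have hs : 2/Real.pi * φ ≤ Real.sin φ := Real.mul_le_sin h0.le hπ
  have hc : 1 - Real.cos φ ≤ φ^2/2 := by
    nlinarith [Real.one_sub_sq_div_two_le_cos (x := φ)]
  have hφπ : φ < Real.pi := lt_of_le_of_lt hπ (by linarith)
  have hcpos : 0 < 1 - Real.cos φ := by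
    nlinarith [Real.sin_pos_of_pos_of_lt_pi h0 hφπ, Real.sin_sq_add_cos_sq φ,
      Real.cos_le_one φ]
  rw [div_le_div_iff₀ h0 hcpos]
  have hπ4 : Real.pi ≤ 4 := by nlinarith [Real.pi_le_four]
  have h1 : 2/Real.pi * φ * φ ≤ Real.sin φ * φ :=
    mul_le_mul_of_nonneg_right hs h0.le
  have h2 : 2/Real.pi * φ * φ = 2 * φ^2 / Real.pi := by ring
  have h3 : Real.pi * (1 - Real.cos φ) ≤ Real.pi * (φ^2/2) :=
    mul_le_mul_of_nonneg_left hc hp.le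
  have h4 : φ^2/2 ≤ 2 * φ^2 / Real.pi := by
    rw [div_le_div_iff₀ (by norm_num) hp]
    nlinarith [sq_nonneg φ]
  nlinarith [sq_nonneg φ]

lemma stmt15e_root (N : ℕ) (hN : 0 < N) (m : ℤ) : stmt15e N m ^ N = 1 := by
  rw [stmt15e_pow, stmt15e]
  have hNne : (N : ℂ) ≠ 0 := Nat.cast_ne_zero.2 hN.ne'
  have h : (2 * (Real.pi:ℂ) * I * ((m * N : ℤ)) / N) = (m : ℂ) * (2 * Real.pi * I) := by
    push_cast
    field_simp
  rw [h]
  exact_mod_cast Complex.exp_int_mul_two_pi_mul_I m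

lemma stmt15_hm_closed (N : ℕ) (hN0 : 0 < N) (m : ℕ) (hm0 : m ≠ 0) (hmN : m < N) :
    ∑ t ∈ Finset.range N, (I * ((2*Real.pi*t/N - Real.pi : ℝ):ℂ)) * stmt15e N (m * t)
      = 2 * Real.pi * I / (stmt15e N m - 1) := by
  have hx1 : stmt15e N m ≠ 1 := by
    apply stmt15e_ne_one N m (by exact_mod_cast hm0)
    rw [_root_.abs_of_nonneg (by positivity : (0:ℤ) ≤ (m:ℤ))]
    exact_mod_cast hmN
  have hxN : stmt15e N m ^ N = 1 := stmt15e_root N hN0 m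
  have hgeo : ∑ t ∈ Finset.range N, stmt15e N m ^ t = 0 := by
    rw [geom_sum_eq hx1, hxN]; simp
  have hsum := stmt15_sum_t_pow (stmt15e N m) N hx1 hxN
  have hNne : (N : ℂ) ≠ 0 := Nat.cast_ne_zero.2 hN0.ne'
  have step : ∀ t : ℕ, (I * ((2*Real.pi*t/N - Real.pi : ℝ):ℂ)) * stmt15e N ((m : ℤ) * (t : ℤ))
      = (2*Real.pi*I/N) * ((t:ℂ) * stmt15e N m ^ t) - (Real.pi * I) * stmt15e N m ^ t := by
    intro t
    rw [← stmt15e_pow]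
    push_cast
    ring
  rw [Finset.sum_congr rfl (fun t _ => step t), Finset.sum_sub_distrib, ← Finset.mul_sum,
    ← Finset.mul_sum, hsum, hgeo, mul_zero, sub_zero]
  have hx0 : stmt15e N m - 1 ≠ 0 := sub_ne_zero.2 hx1
  field_simp

lemma stmt15_expand {E : Type*} [NormedAddCommGroup E] [InnerProductSpace ℂ E]
    (n N : ℕ) (x y : Fin n → E) (t : ℕ) :
    (inner ℂ (∑ i : Fin n, stmt15e N ((i:ℕ) * t) • x i)
        (∑ k : Fin n, stmt15e N ((k:ℕ) * t) • y k) : ℂ)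
      = ∑ i : Fin n, ∑ k : Fin n,
          stmt15e N (((k:ℤ) - (i:ℤ)) * t) * (inner ℂ (x i) (y k) : ℂ) := by
  rw [sum_inner]
  refine Finset.sum_congr rfl fun i _ => ?_
  rw [inner_smul_left, inner_sum, Finset.mul_sum]
  refine Finset.sum_congr rfl fun k _ => ?_
  rw [inner_smul_right, stmt15e_conj, ← mul_assoc, ← stmt15e_add]
  congr 2
  push_cast
  ring

lemma stmt15_parseval {E : Type*} [NormedAddCommGroup E] [InnerProductSpace ℂ E]
    (n : ℕ) (hn0 : 0 < n) (v : Fin n → E) :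
    ∑ t ∈ Finset.range (2*n), ‖∑ k : Fin n, stmt15e (2*n) ((k:ℕ) * t) • v k‖^2
      = 2*n * ∑ k : Fin n, ‖v k‖^2 := by
  set N := 2*n with hNdef
  have hN0 : 0 < N := by omega
  have key : ∑ t ∈ Finset.range N, (inner ℂ (∑ k : Fin n, stmt15e N ((k:ℕ) * t) • v k)
      (∑ k : Fin n, stmt15e N ((k:ℕ) * t) • v k) : ℂ)
      = (N:ℂ) * ∑ k : Fin n, (inner ℂ (v k) (v k) : ℂ) := by
    rw [Finset.sum_congr rfl (fun t _ => stmt15_expand n N v v t), Finset.sum_comm]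
    have inner1 : ∀ i : Fin n,
        ∑ t ∈ Finset.range N, ∑ k : Fin n,
          stmt15e N (((k:ℤ) - (i:ℤ)) * t) * (inner ℂ (v i) (v k) : ℂ)
        = (N:ℂ) * (inner ℂ (v i) (v i) : ℂ) := by
      intro i
      rw [Finset.sum_comm]
      have h2 : ∀ k : Fin n,
          ∑ t ∈ Finset.range N, stmt15e N (((k:ℤ) - (i:ℤ)) * t) * (inner ℂ (v i) (v k) : ℂ)
          = (if k = i then (N:ℂ) else 0) * (inner ℂ (v i) (v k) : ℂ) := by
        intro k
        rw [← Finset.sum_mul, stmt15e_orth N hN0 _ (by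
          have h1 : (k:ℕ) < n := k.isLt
          have h2 : (i:ℕ) < n := i.isLt
          rw [abs_sub_lt_iff]
          constructor <;> [skip; skip] <;> push_cast <;> omega)]
        congr 1
        simp only [sub_eq_zero, Nat.cast_inj, Fin.val_inj]
      rw [Finset.sum_congr rfl (fun k _ => h2 k)]
      simp
    exact (Finset.sum_congr rfl (fun i _ => inner1 i)).trans (Finset.mul_sum _ _ _).symm
  have key2 : ∑ t ∈ Finset.range N, ((‖∑ k : Fin n, stmt15e N ((k:ℕ) * t) • v k‖ : ℝ) : ℂ)^2
      = (N:ℂ) * ∑ k : Fin n, ((‖v k‖ : ℝ) : ℂ)^2 := by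
    simp only [inner_self_eq_norm_sq_to_K] at key
    exact key
  exact_mod_cast key2

set_option maxHeartbeats 1000000 in
lemma stmt15_core {E : Type*} [NormedAddCommGroup E] [InnerProductSpace ℂ E]
    (n : ℕ) (hn : 2 ≤ n) (b S : Fin n → E) (B M : ℝ)
    (hB : ∀ i, ‖b i‖ ≤ B) (hM : ∀ k, ‖S k‖ ≤ M)
    (horth : ∀ i k : Fin n, (inner ℂ (b i) (S k) : ℂ) = if i ≤ k then 1 else 0) :
    Real.log n ≤ 8 * Real.pi * (B * M) := by
  classical
  have hn0 : 0 < n := by omega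
  have hB0 : 0 ≤ B := le_trans (norm_nonneg _) (hB ⟨0, hn0⟩)
  have hM0 : 0 ≤ M := le_trans (norm_nonneg _) (hM ⟨0, hn0⟩)
  have hN0 : 0 < 2*n := by omega
  have hNR : (0:ℝ) < (2*n:ℕ) := by positivity
  set hmc : ℕ → ℂ := (fun m : ℕ => ∑ t ∈ Finset.range (2*n), (I * ((2*Real.pi*t/((2*n:ℕ):ℝ) - Real.pi : ℝ):ℂ)) * stmt15e (2*n) ((m:ℤ) * t)) with hhmc
  -- real part facts about the kernel
  have hmc_re : ∀ m : ℕ, m ≠ 0 → m < 2*n →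
      (hmc m).re = Real.pi * Real.sin (2*Real.pi*m/((2*n:ℕ):ℝ)) / (1 - Real.cos (2*Real.pi*m/((2*n:ℕ):ℝ))) := by
    intro m h0 hmN
    rw [hhmc]
    simp only []
    rw [stmt15_hm_closed (2*n) hN0 m h0 hmN, stmt15_re_val]
  have hmc0 : (hmc 0).re = 0 := by
    rw [hhmc]
    simp only []
    rw [Complex.re_sum]
    apply Finset.sum_eq_zero
    intro t _
    have : ((0:ℕ):ℤ) * (t:ℤ) = 0 := by simp
    rw [this, show stmt15e (2*n) 0 = 1 by simp [stmt15e], mul_one]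
    generalize (2*Real.pi*(t:ℝ)/((2*n:ℕ):ℝ) - Real.pi) = r
    simp
  have hmc_nonneg : ∀ m : ℕ, m < n → 0 ≤ (hmc m).re := by
    intro m hmn
    rcases Nat.eq_zero_or_pos m with rfl | hm1
    · rw [hmc0]
    · rw [hmc_re m (by omega) (by omega)]
      apply stmt15_ratio_nonneg
      · positivity
      · rw [div_lt_iff₀ hNR]
        push_cast
        nlinarith [Real.pi_pos, (show (m:ℝ) < n by exact_mod_cast hmn)]
  have hmc_big : ∀ m : ℕ, 1 ≤ m → m ≤ n/2 → (n:ℝ)/m ≤ (hmc m).re := by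
    intro m h1 h2
    have hmn : m < n := by omega
    have h2m : 2*m ≤ n := by omega
    rw [hmc_re m (by omega) (by omega)]
    have hφ0 : (0:ℝ) < 2*Real.pi*m/((2*n:ℕ):ℝ) := by
      have : (0:ℝ) < (m:ℝ) := by exact_mod_cast h1
      positivity
    have hφπ : 2*Real.pi*(m:ℝ)/((2*n:ℕ):ℝ) ≤ Real.pi/2 := by
      rw [div_le_div_iff₀ hNR (by norm_num)]
      push_cast
      nlinarith [Real.pi_pos, (show (2*m:ℝ) ≤ n by exact_mod_cast h2m)]
    refine le_trans (le_of_eq ?_) (stmt15_ratio_ge hφ0 hφπ)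
    have hm0 : (0:ℝ) < (m:ℝ) := by exact_mod_cast h1
    have hpi := Real.pi_pos
    field_simp
    push_cast
    ring
  -- Q and its two evaluations
  set Q : ℂ := ∑ t ∈ Finset.range (2*n), (I * ((2*Real.pi*t/((2*n:ℕ):ℝ) - Real.pi : ℝ):ℂ)) * (inner ℂ (∑ i : Fin n, stmt15e (2*n) ((i:ℕ) * t) • b i) (∑ k : Fin n, stmt15e (2*n) ((k:ℕ) * t) • S k) : ℂ) with hQ
  have hQ_eval : Q = ∑ i : Fin n, ∑ k : Fin n,
      (if i ≤ k then hmc ((k:ℕ) - (i:ℕ)) else 0) := by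
    rw [hQ]
    have step1 : ∀ t ∈ Finset.range (2*n), (I * ((2*Real.pi*t/((2*n:ℕ):ℝ) - Real.pi : ℝ):ℂ)) * (inner ℂ (∑ i : Fin n, stmt15e (2*n) ((i:ℕ) * t) • b i) (∑ k : Fin n, stmt15e (2*n) ((k:ℕ) * t) • S k) : ℂ)
        = ∑ i : Fin n, ∑ k : Fin n,
            (if i ≤ k then (I * ((2*Real.pi*t/((2*n:ℕ):ℝ) - Real.pi : ℝ):ℂ)) * stmt15e (2*n) (((k:ℤ) - (i:ℤ)) * t) else 0) := by
      intro t _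
      rw [stmt15_expand n (2*n) b S t, Finset.mul_sum]
      refine Finset.sum_congr rfl fun i _ => ?_
      rw [Finset.mul_sum]
      refine Finset.sum_congr rfl fun k _ => ?_
      rw [horth i k]
      by_cases h : i ≤ k
      · simp only [if_pos h, mul_one]
      · simp [h]
    rw [Finset.sum_congr rfl step1, Finset.sum_comm]
    refine Finset.sum_congr rfl fun i _ => ?_
    rw [Finset.sum_comm]
    refine Finset.sum_congr rfl fun k _ => ?_
    by_cases h : i ≤ k
    · simp only [if_pos h]
      rw [hhmc]
      simp only []
      refine Finset.sum_congr rfl fun t _ => ?_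
      congr 2
      have hle : (i:ℕ) ≤ (k:ℕ) := h
      push_cast [Nat.cast_sub hle]
      ring
    · simp [h]
  -- upper bound
  have hupper : Q.re ≤ Real.pi * ((2*n:ℕ) * (n:ℝ) * (B * M)) := by
    have habs : ∀ t ∈ Finset.range (2*n),
        ‖(I * ((2*Real.pi*t/((2*n:ℕ):ℝ) - Real.pi : ℝ):ℂ)) * (inner ℂ (∑ i : Fin n, stmt15e (2*n) ((i:ℕ) * t) • b i) (∑ k : Fin n, stmt15e (2*n) ((k:ℕ) * t) • S k) : ℂ)‖ ≤ Real.pi * (‖(∑ i : Fin n, stmt15e (2*n) ((i:ℕ) * t) • b i)‖ * ‖(∑ k : Fin n, stmt15e (2*n) ((k:ℕ) * t) • S k)‖) := by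
      intro t ht
      rw [norm_mul]
      have hg : ‖I * ((2*Real.pi*t/((2*n:ℕ):ℝ) - Real.pi : ℝ):ℂ)‖ ≤ Real.pi := by
        rw [norm_mul, Complex.norm_I, one_mul, Complex.norm_real, Real.norm_eq_abs, abs_le]
        have ht' : (t:ℝ) < ((2*n:ℕ):ℝ) := by exact_mod_cast Finset.mem_range.1 ht
        have h1 : 0 ≤ 2*Real.pi*(t:ℝ)/((2*n:ℕ):ℝ) := by positivity
        have h2 : 2*Real.pi*(t:ℝ)/((2*n:ℕ):ℝ) ≤ 2*Real.pi := by
          rw [div_le_iff₀ hNR]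
          nlinarith [Real.pi_pos, ht', Nat.cast_nonneg (α := ℝ) t]
        constructor <;> linarith
      refine mul_le_mul hg ?_ (norm_nonneg _) Real.pi_pos.le
      exact norm_inner_le_norm _ _
    have hQabs : Q.re ≤ ∑ t ∈ Finset.range (2*n), Real.pi * (‖(∑ i : Fin n, stmt15e (2*n) ((i:ℕ) * t) • b i)‖ * ‖(∑ k : Fin n, stmt15e (2*n) ((k:ℕ) * t) • S k)‖) := by
      refine le_trans (Complex.re_le_norm Q) (le_trans ?_ (Finset.sum_le_sum habs))
      rw [hQ]
      exact
        norm_sum_le (Finset.range (2*n)) (fun t => (I * ((2*Real.pi*t/((2*n:ℕ):ℝ) - Real.pi : ℝ):ℂ)) * (inner ℂ (∑ i : Fin n, stmt15e (2*n) ((i:ℕ) * t) • b i) (∑ k : Fin n, stmt15e (2*n) ((k:ℕ) * t) • S k) : ℂ))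
    have hWpar := stmt15_parseval n hn0 b
    have hUpar := stmt15_parseval n hn0 S
    have hWb : ∑ i : Fin n, ‖b i‖^2 ≤ (n:ℝ) * B^2 := by
      calc ∑ i : Fin n, ‖b i‖^2 ≤ ∑ _i : Fin n, B^2 :=
            Finset.sum_le_sum (fun i _ => pow_le_pow_left₀ (norm_nonneg _) (hB i) 2)
        _ = (n:ℝ) * B^2 := by
            rw [Finset.sum_const, Finset.card_univ, Fintype.card_fin, nsmul_eq_mul]
    have hUb : ∑ k : Fin n, ‖S k‖^2 ≤ (n:ℝ) * M^2 := by
      calc ∑ k : Fin n, ‖S k‖^2 ≤ ∑ _k : Fin n, M^2 :=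
            Finset.sum_le_sum (fun k _ => pow_le_pow_left₀ (norm_nonneg _) (hM k) 2)
        _ = (n:ℝ) * M^2 := by
            rw [Finset.sum_const, Finset.card_univ, Fintype.card_fin, nsmul_eq_mul]
    have hcs : ∑ t ∈ Finset.range (2*n), ‖(∑ i : Fin n, stmt15e (2*n) ((i:ℕ) * t) • b i)‖ * ‖(∑ k : Fin n, stmt15e (2*n) ((k:ℕ) * t) • S k)‖ ≤ ((2*n:ℕ):ℝ) * (n:ℝ) * (B * M) := by
      have cs := Finset.sum_mul_sq_le_sq_mul_sq (Finset.range (2*n))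
        (fun t => ‖(∑ i : Fin n, stmt15e (2*n) ((i:ℕ) * t) • b i)‖) (fun t => ‖(∑ k : Fin n, stmt15e (2*n) ((k:ℕ) * t) • S k)‖)
      have hWsum : ∑ t ∈ Finset.range (2*n), ‖(∑ i : Fin n, stmt15e (2*n) ((i:ℕ) * t) • b i)‖^2 ≤ ((2*n:ℕ):ℝ) * ((n:ℝ) * B^2) := by
        rw [hWpar]
        have : (0:ℝ) ≤ 2*(n:ℝ) := by positivity
        push_cast
        nlinarith [hWb]
      have hUsum : ∑ t ∈ Finset.range (2*n), ‖(∑ k : Fin n, stmt15e (2*n) ((k:ℕ) * t) • S k)‖^2 ≤ ((2*n:ℕ):ℝ) * ((n:ℝ) * M^2) := by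
        rw [hUpar]
        push_cast
        nlinarith [hUb]
      have hfg0 : (0:ℝ) ≤ ∑ t ∈ Finset.range (2*n), ‖(∑ i : Fin n, stmt15e (2*n) ((i:ℕ) * t) • b i)‖ * ‖(∑ k : Fin n, stmt15e (2*n) ((k:ℕ) * t) • S k)‖ :=
        Finset.sum_nonneg fun t _ => mul_nonneg (norm_nonneg _) (norm_nonneg _)
      have hK0 : (0:ℝ) ≤ ((2*n:ℕ):ℝ) * (n:ℝ) * (B * M) := by positivity
      have hsq : (∑ t ∈ Finset.range (2*n), ‖(∑ i : Fin n, stmt15e (2*n) ((i:ℕ) * t) • b i)‖ * ‖(∑ k : Fin n, stmt15e (2*n) ((k:ℕ) * t) • S k)‖)^2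
          ≤ (((2*n:ℕ):ℝ) * (n:ℝ) * (B * M))^2 := by
        refine le_trans cs ?_
        have h1 : (0:ℝ) ≤ ∑ t ∈ Finset.range (2*n), ‖(∑ i : Fin n, stmt15e (2*n) ((i:ℕ) * t) • b i)‖^2 :=
          Finset.sum_nonneg fun t _ => sq_nonneg _
        have h2 : (0:ℝ) ≤ ∑ t ∈ Finset.range (2*n), ‖(∑ k : Fin n, stmt15e (2*n) ((k:ℕ) * t) • S k)‖^2 :=
          Finset.sum_nonneg fun t _ => sq_nonneg _
        calc (∑ t ∈ Finset.range (2*n), ‖(∑ i : Fin n, stmt15e (2*n) ((i:ℕ) * t) • b i)‖^2) * (∑ t ∈ Finset.range (2*n), ‖(∑ k : Fin n, stmt15e (2*n) ((k:ℕ) * t) • S k)‖^2)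
            ≤ (((2*n:ℕ):ℝ) * ((n:ℝ) * B^2)) * (((2*n:ℕ):ℝ) * ((n:ℝ) * M^2)) :=
              mul_le_mul hWsum hUsum h2 (by positivity)
          _ = (((2*n:ℕ):ℝ) * (n:ℝ) * (B * M))^2 := by ring
      calc ∑ t ∈ Finset.range (2*n), ‖(∑ i : Fin n, stmt15e (2*n) ((i:ℕ) * t) • b i)‖ * ‖(∑ k : Fin n, stmt15e (2*n) ((k:ℕ) * t) • S k)‖
          = Real.sqrt ((∑ t ∈ Finset.range (2*n), ‖(∑ i : Fin n, stmt15e (2*n) ((i:ℕ) * t) • b i)‖ * ‖(∑ k : Fin n, stmt15e (2*n) ((k:ℕ) * t) • S k)‖)^2) := (Real.sqrt_sq hfg0).symm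
        _ ≤ Real.sqrt ((((2*n:ℕ):ℝ) * (n:ℝ) * (B * M))^2) := Real.sqrt_le_sqrt hsq
        _ = ((2*n:ℕ):ℝ) * (n:ℝ) * (B * M) := Real.sqrt_sq hK0
    calc Q.re ≤ ∑ t ∈ Finset.range (2*n), Real.pi * (‖(∑ i : Fin n, stmt15e (2*n) ((i:ℕ) * t) • b i)‖ * ‖(∑ k : Fin n, stmt15e (2*n) ((k:ℕ) * t) • S k)‖) := hQabs
      _ = Real.pi * ∑ t ∈ Finset.range (2*n), ‖(∑ i : Fin n, stmt15e (2*n) ((i:ℕ) * t) • b i)‖ * ‖(∑ k : Fin n, stmt15e (2*n) ((k:ℕ) * t) • S k)‖ := by rw [Finset.mul_sum]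
      _ ≤ Real.pi * (((2*n:ℕ):ℝ) * (n:ℝ) * (B * M)) :=
          mul_le_mul_of_nonneg_left hcs Real.pi_pos.le
  -- lower bound
  have hlog0 : 0 ≤ Real.log n := Real.log_nonneg (by exact_mod_cast hn0)
  have hlower : ((n:ℝ)/2) * ((n:ℝ) * (Real.log n / 2)) ≤ Q.re := by
    set p := n/2 with hp
    have hp1 : 1 ≤ p := by omega
    have hpn : p < n := by omega
    have hQre : Q.re = ∑ i : Fin n, ∑ k : Fin n,
        (if i ≤ k then (hmc ((k:ℕ)-(i:ℕ))).re else 0) := by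
      rw [hQ_eval, Complex.re_sum]
      refine Finset.sum_congr rfl fun i _ => ?_
      rw [Complex.re_sum]
      exact Finset.sum_congr rfl fun k _ => by rw [apply_ite Complex.re, Complex.zero_re]
    have hfnn : ∀ i k : Fin n, 0 ≤ (if i ≤ k then (hmc ((k:ℕ)-(i:ℕ))).re else 0) := by
      intro i k
      by_cases h : i ≤ k
      · rw [if_pos h]
        exact hmc_nonneg _ (lt_of_le_of_lt (Nat.sub_le _ _) k.isLt)
      · rw [if_neg h]
    have hsq : (n:ℝ) ≤ ((p:ℝ)+1)^2 := by
      have h2p : n ≤ 2*p+1 := by omega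
      have h : n ≤ (p+1)^2 := by nlinarith [h2p]
      exact_mod_cast h
    have hL1 : Real.log n / 2 ≤ Real.log ((p:ℝ)+1) := by
      have hs : Real.sqrt n ≤ (p:ℝ)+1 := by
        rw [show ((p:ℝ)+1) = Real.sqrt (((p:ℝ)+1)^2) from (Real.sqrt_sq (by positivity)).symm]
        exact Real.sqrt_le_sqrt hsq
      have hlog := Real.log_le_log (Real.sqrt_pos.2 (by exact_mod_cast hn0)) hs
      rwa [Real.log_sqrt (Nat.cast_nonneg n)] at hlog
    have hHarm : Real.log ((p:ℝ)+1) ≤ ∑ m ∈ Finset.Icc 1 p, ((m:ℝ))⁻¹ := by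
      have h := log_add_one_le_harmonic p
      rw [harmonic_eq_sum_Icc] at h
      push_cast at h
      exact h
    have key_i : ∀ i : Fin n, (i:ℕ) < n - p →
        (n:ℝ) * (Real.log n / 2) ≤ ∑ k : Fin n,
          (if i ≤ k then (hmc ((k:ℕ)-(i:ℕ))).re else 0) := by
      intro i hi
      have hmem : ∀ m ∈ Finset.Icc 1 p, (i:ℕ) + m < n := by
        intro m hm
        rw [Finset.mem_Icc] at hm
        omega
      set κ : ℕ → Fin n := fun m => ⟨((i:ℕ) + m) % n, Nat.mod_lt _ hn0⟩ with hκ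
      have hκval : ∀ m ∈ Finset.Icc 1 p, ((κ m):ℕ) = (i:ℕ) + m := by
        intro m hm
        simp only [hκ]
        exact Nat.mod_eq_of_lt (hmem m hm)
      have hinj : ∀ m ∈ Finset.Icc 1 p, ∀ m' ∈ Finset.Icc 1 p, κ m = κ m' → m = m' := by
        intro m hm m' hm' h
        have h2 := congrArg Fin.val h
        rw [hκval m hm, hκval m' hm'] at h2
        omega
      have himg_eq : ∑ k ∈ (Finset.Icc 1 p).image κ,
            (if i ≤ k then (hmc ((k:ℕ)-(i:ℕ))).re else 0)
          = ∑ m ∈ Finset.Icc 1 p, (if i ≤ κ m then (hmc (((κ m):ℕ)-(i:ℕ))).re else 0) :=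
        Finset.sum_image hinj
      have hterm : ∀ m ∈ Finset.Icc 1 p,
          (n:ℝ)/m ≤ (if i ≤ κ m then (hmc (((κ m):ℕ)-(i:ℕ))).re else 0) := by
        intro m hm
        have hval := hκval m hm
        rw [Finset.mem_Icc] at hm
        have h1 : i ≤ κ m := by
          rw [Fin.le_def, hval]
          omega
        rw [if_pos h1, hval, show (i:ℕ) + m - (i:ℕ) = m by omega]
        exact hmc_big m hm.1 hm.2
      calc (n:ℝ) * (Real.log n / 2) ≤ (n:ℝ) * ∑ m ∈ Finset.Icc 1 p, ((m:ℝ))⁻¹ :=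
            mul_le_mul_of_nonneg_left (le_trans hL1 hHarm) (Nat.cast_nonneg n)
        _ = ∑ m ∈ Finset.Icc 1 p, (n:ℝ)/m := by
            rw [Finset.mul_sum]
            exact Finset.sum_congr rfl fun m _ => (div_eq_mul_inv (n:ℝ) (m:ℝ)).symm
        _ ≤ ∑ m ∈ Finset.Icc 1 p, (if i ≤ κ m then (hmc (((κ m):ℕ)-(i:ℕ))).re else 0) :=
            Finset.sum_le_sum hterm
        _ = ∑ k ∈ (Finset.Icc 1 p).image κ,
              (if i ≤ k then (hmc ((k:ℕ)-(i:ℕ))).re else 0) := himg_eq.symm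
        _ ≤ ∑ k : Fin n, (if i ≤ k then (hmc ((k:ℕ)-(i:ℕ))).re else 0) :=
            Finset.sum_le_sum_of_subset_of_nonneg (Finset.subset_univ _)
              (fun k _ _ => hfnn i k)
    have hpt : ∀ i : Fin n,
        (if (i:ℕ) < n - p then (n:ℝ) * (Real.log n / 2) else 0)
          ≤ ∑ k : Fin n, (if i ≤ k then (hmc ((k:ℕ)-(i:ℕ))).re else 0) := by
      intro i
      by_cases h : (i:ℕ) < n - p
      · rw [if_pos h]
        exact key_i i h
      · rw [if_neg h]
        exact Finset.sum_nonneg fun k _ => hfnn i k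
    have hcount : ∑ i : Fin n, (if (i:ℕ) < n - p then (n:ℝ) * (Real.log n / 2) else 0)
        = ((n-p:ℕ):ℝ) * ((n:ℝ) * (Real.log n / 2)) := by
      rw [Fin.sum_univ_eq_sum_range (fun j => if j < n - p then (n:ℝ) * (Real.log n / 2) else 0) n]
      rw [← Finset.sum_filter]
      have hfe : (Finset.range n).filter (fun j => j < n - p) = Finset.range (n-p) := by
        ext j
        simp only [Finset.mem_filter, Finset.mem_range]
        omega
      rw [hfe, Finset.sum_const, Finset.card_range, nsmul_eq_mul]
    calc ((n:ℝ)/2) * ((n:ℝ) * (Real.log n / 2))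
        ≤ ((n - p:ℕ):ℝ) * ((n:ℝ) * (Real.log n / 2)) := by
          have h1 : (n:ℝ) ≤ 2*((n-p:ℕ):ℝ) := by exact_mod_cast (show n ≤ 2*(n-p) by omega)
          have h2 : 0 ≤ (n:ℝ) * (Real.log n / 2) := by positivity
          nlinarith
      _ = ∑ i : Fin n, (if (i:ℕ) < n - p then (n:ℝ) * (Real.log n / 2) else 0) := hcount.symm
      _ ≤ ∑ i : Fin n, ∑ k : Fin n, (if i ≤ k then (hmc ((k:ℕ)-(i:ℕ))).re else 0) :=
          Finset.sum_le_sum fun i _ => hpt i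
      _ = Q.re := hQre.symm
  have hπ := Real.pi_pos
  have hnR : (0:ℝ) < (n:ℝ) := by exact_mod_cast hn0
  have hcomb := hlower.trans hupper
  push_cast at hcomb
  nlinarith [hcomb, mul_pos hnR hnR]

/-- Matrix application: for an invertible `n × n` complex matrix `A` with columns
`aₖ = A · eₖ` and rows `bᵢ` of `A⁻¹`, the families `{conj(bᵢᵀ)}` and `{aₖ}` are a
bi-orthogonal pair in `ℂⁿ`, and there is an absolute `c > 0` with
`log n ≤ c · maxₖ ‖bₖ‖ · maxₖ ‖∑_{j≤k} aⱼ‖` in the Euclidean norm. -/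
theorem stmt15 :
    ∃ c : ℝ, 0 < c ∧
      ∀ (n : ℕ) (hn : 2 ≤ n) (A : Matrix (Fin n) (Fin n) ℂ),
        IsUnit A.det →
        (∀ i k : Fin n,
          (inner ℂ ((WithLp.equiv 2 (Fin n → ℂ)).symm (fun j => star (A⁻¹ i j)))
                 ((WithLp.equiv 2 (Fin n → ℂ)).symm (fun j => A j k)) : ℂ)
            = if i = k then 1 else 0) ∧
        Real.log n ≤
          c * ((Finset.univ : Finset (Fin n)).sup'
                ⟨⟨0, by omega⟩, Finset.mem_univ _⟩ fun k =>
                  ‖(WithLp.equiv 2 (Fin n → ℂ)).symm (fun j => A⁻¹ k j)‖)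
            * ((Finset.univ : Finset (Fin n)).sup'
                ⟨⟨0, by omega⟩, Finset.mem_univ _⟩ fun k =>
                  ‖∑ j ∈ Finset.Iic k,
                    (WithLp.equiv 2 (Fin n → ℂ)).symm (fun i => A i j)‖) := by
  refine ⟨8 * Real.pi, by positivity, ?_⟩
  intro n hn A hA
  have hn0 : 0 < n := by omega
  set b : Fin n → EuclideanSpace ℂ (Fin n) :=
    fun i => (WithLp.equiv 2 (Fin n → ℂ)).symm (fun j => star (A⁻¹ i j)) with hb
  set a : Fin n → EuclideanSpace ℂ (Fin n) :=
    fun j => (WithLp.equiv 2 (Fin n → ℂ)).symm (fun i => A i j) with ha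
  have hib : ∀ i k : Fin n, (inner ℂ (b i) (a k) : ℂ) = if i = k then 1 else 0 := by
    intro i k
    have : (inner ℂ (b i) (a k) : ℂ) = ∑ j : Fin n, A⁻¹ i j * A j k := by
      rw [PiLp.inner_apply]
      refine Finset.sum_congr rfl fun j _ => ?_
      rw [hb, ha]
      simp only [WithLp.equiv_symm_apply, PiLp.toLp_apply, RCLike.inner_apply']
      rw [show (starRingEnd ℂ) (star (A⁻¹ i j)) = A⁻¹ i j from star_star _]
    rw [this, ← Matrix.mul_apply, Matrix.nonsing_inv_mul A hA, Matrix.one_apply]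
  set S : Fin n → EuclideanSpace ℂ (Fin n) := fun k => ∑ j ∈ Finset.Iic k, a j with hS
  have horth : ∀ i k : Fin n, (inner ℂ (b i) (S k) : ℂ) = if i ≤ k then 1 else 0 := by
    intro i k
    rw [hS]
    simp only [inner_sum]
    rw [Finset.sum_congr rfl (fun j _ => hib i j), Finset.sum_ite_eq]
    simp [Finset.mem_Iic]
  set B := (Finset.univ : Finset (Fin n)).sup'
    ⟨⟨0, by omega⟩, Finset.mem_univ _⟩ (fun k =>
      ‖(WithLp.equiv 2 (Fin n → ℂ)).symm (fun j => A⁻¹ k j)‖) with hBdef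
  set M := (Finset.univ : Finset (Fin n)).sup'
    ⟨⟨0, by omega⟩, Finset.mem_univ _⟩ (fun k =>
      ‖∑ j ∈ Finset.Iic k, a j‖) with hMdef
  have hBle : ∀ i : Fin n, ‖b i‖ ≤ B := by
    intro i
    have hnorm : ‖b i‖ = ‖((WithLp.equiv 2 (Fin n → ℂ)).symm (fun j => A⁻¹ i j) :
        EuclideanSpace ℂ (Fin n))‖ := by
      rw [EuclideanSpace.norm_eq, EuclideanSpace.norm_eq]
      congr 1
      refine Finset.sum_congr rfl fun j _ => ?_
      rw [hb]
      simp only [WithLp.equiv_symm_apply, PiLp.toLp_apply]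
      rw [norm_star]
    rw [hnorm, hBdef]
    exact Finset.le_sup' (fun k => ‖((WithLp.equiv 2 (Fin n → ℂ)).symm (fun j => A⁻¹ k j) :
      EuclideanSpace ℂ (Fin n))‖) (Finset.mem_univ i)
  have hMle : ∀ k : Fin n, ‖S k‖ ≤ M := by
    intro k
    rw [hMdef]
    have := Finset.le_sup' (fun k => ‖∑ j ∈ Finset.Iic k, a j‖) (Finset.mem_univ k)
    simpa [hS] using this
  refine ⟨hib, ?_⟩
  have := stmt15_core n hn b S B M hBle hMle horth
  calc Real.log n ≤ 8 * Real.pi * (B * M) := this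
    _ = 8 * Real.pi * B * M := by ring
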